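/- Let S be a length-preserving rewriting system over a finite alphabet Σ with a, b ∈ Σ, let d ∉ Σ and c ∉ Σ ∪ {d} be new letters, and set Γ = Σ ∪ {d}. Define the languages over (Γ ∪ {c})²: E = { [e,e] : e ∈ Σ }, R = { r × ℓ : (ℓ → r) ∈ S }, and L = [d,c] ([a,c])⁺ [d,d] ( E* R E* [d,d] )* ([c,b])⁺ [c,d]. Then for all integers n ≥ 2: a^{n−1} ⟹*_S b^{n−1} if and only if L contains a word of the form (x c^n) × (c^n x) for some x ∈ Γ*. -/

import Mathlib

open Computability

namespace RewriteAux

theorem map_fst_zipWith {α β : Type*} : ∀ (u : List α) (v : List β), u.length = v.length →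
    (List.zipWith Prod.mk u v).map Prod.fst = u
  | [], [], _ => rfl
  | x :: u, y :: v, h => by
      simp [map_fst_zipWith u v (by simpa using h)]
  | [], _ :: _, h => by simp at h
  | _ :: _, [], h => by simp at h

theorem map_snd_zipWith {α β : Type*} : ∀ (u : List α) (v : List β), u.length = v.length →
    (List.zipWith Prod.mk u v).map Prod.snd = v
  | [], [], _ => rfl
  | x :: u, y :: v, h => by
      simp [map_snd_zipWith u v (by simpa using h)]
  | [], _ :: _, h => by simp at h
  | _ :: _, [], h => by simp at h

theorem zip_replicate {α β : Type*} (k : ℕ) (x : α) (y : β) :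
    List.zipWith Prod.mk (List.replicate k x) (List.replicate k y) = List.replicate k (x, y) := by
  induction k with
  | zero => rfl
  | succ k ih => simp [List.replicate_succ, ih]

theorem flatten_rep_singleton {α : Type*} (k : ℕ) (q : α) :
    (List.replicate k [q]).flatten = List.replicate k q := by
  induction k with
  | zero => rfl
  | succ k ih => simp [List.replicate_succ, ih]

theorem zip_diag {α : Type*} (u : List α) :
    List.zipWith Prod.mk u u = (u.map fun g => [(g, g)]).flatten := by
  induction u with
  | nil => rfl
  | cons x u ih => rw [List.map_cons, List.flatten_cons, ← ih]; rfl

theorem split_no_c {α : Type*} {c : α} (x v rest : List α) (k : ℕ)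
    (h : x ++ List.replicate k c = v ++ rest)
    (hv : ∀ g ∈ v, g ≠ c) :
    ∃ s, x = v ++ s ∧ rest = s ++ List.replicate k c := by
  rcases List.append_eq_append_iff.mp h with ⟨a', hv', hr⟩ | ⟨s, hx', hr⟩
  · rcases a' with _ | ⟨g, a'⟩
    · exact ⟨[], by simp [hv'], by simpa using hr.symm⟩
    · exfalso
      refine hv g (by simp [hv']) ?_
      have : g ∈ List.replicate k c := by rw [hr]; simp
      exact List.eq_of_mem_replicate this
  · exact ⟨s, hx', hr⟩

theorem cblock {α : Type*} {c dd : α} (x t : List α) (nk j : ℕ)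
    (h : List.replicate nk c ++ x = List.replicate j c ++ (dd :: t))
    (hx : ∀ g ∈ x, g ≠ c) (hcd : c ≠ dd) : j = nk ∧ x = dd :: t := by
  rcases le_total j nk with hle | hle
  · obtain ⟨i, rfl⟩ : ∃ i, nk = j + i := ⟨nk - j, by omega⟩
    rw [List.replicate_add, List.append_assoc] at h
    have h2 : List.replicate i c ++ x = dd :: t := List.append_cancel_left h
    cases i with
    | zero => exact ⟨rfl, by simpa using h2⟩
    | succ i =>
      exfalso
      rw [List.replicate_succ] at h2
      exact hcd (List.cons_eq_cons.mp h2).1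
  · obtain ⟨i, rfl⟩ : ∃ i, j = nk + i := ⟨j - nk, by omega⟩
    rw [List.replicate_add, List.append_assoc] at h
    have h2 : x = List.replicate i c ++ (dd :: t) := List.append_cancel_left h
    cases i with
    | zero => exact ⟨rfl, by simpa using h2⟩
    | succ i =>
      exfalso
      rw [List.replicate_succ] at h2
      exact hx c (by rw [h2]; simp) rfl

theorem dsplit {α : Type*} {dd : α} (u s v t : List α)
    (h : u ++ dd :: s = v ++ dd :: t) (hu : ∀ g ∈ u, g ≠ dd) (hv : ∀ g ∈ v, g ≠ dd) :
    u = v ∧ s = t := by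
  rcases List.append_eq_append_iff.mp h with ⟨a', hv', hr⟩ | ⟨a', hu', hr⟩
  · rcases a' with _ | ⟨g, a'⟩
    · refine ⟨by simpa using hv'.symm, by simpa using hr⟩
    · exfalso
      have hg : dd = g := (List.cons_eq_cons.mp hr).1
      exact hv g (by simp [hv']) hg.symm
  · rcases a' with _ | ⟨g, a'⟩
    · refine ⟨by simpa using hu', by simpa using hr.symm⟩
    · exfalso
      have hg : dd = g := (List.cons_eq_cons.mp hr).1
      exact hu g (by simp [hu']) hg.symm

theorem flatten_of_all_singleton {α : Type*} {q : List α} :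
    ∀ (Ls : List (List α)), (∀ y ∈ Ls, y = q) → Ls.flatten = (List.replicate Ls.length q).flatten
  | [], _ => rfl
  | y :: Ls, h => by
      simp only [List.flatten_cons, List.length_cons, List.replicate_succ]
      rw [h y (by simp), flatten_of_all_singleton Ls (fun z hz => h z (by simp [hz]))]

theorem mem_singleton_star {α : Type*} {q : α} {w : List α}
    (h : w ∈ (({[q]} : Language α))∗) : ∃ k, w = List.replicate k q := by
  obtain ⟨Ls, rfl, hLs⟩ := Language.mem_kstar.mp h
  refine ⟨Ls.length, ?_⟩
  rw [flatten_of_all_singleton Ls (fun y hy => hLs y hy), flatten_rep_singleton]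

theorem rep_mem_singleton_star {α : Type*} (q : α) (k : ℕ) :
    List.replicate k q ∈ (({[q]} : Language α))∗ := by
  refine Language.mem_kstar.mpr ⟨List.replicate k [q], (flatten_rep_singleton k q).symm, ?_⟩
  intro y hy
  exact List.eq_of_mem_replicate hy

theorem diag_mem_Estar {α : Type*} {Sig : Set α} (E' : Language (α × α))
    (hE' : E' = {w | ∃ e ∈ Sig, w = [(e, e)]}) (u : List α) (hu : ∀ g ∈ u, g ∈ Sig) :
    List.zipWith Prod.mk u u ∈ E'∗ := by
  subst hE'
  rw [zip_diag]
  refine Language.join_mem_kstar ?_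
  intro y hy
  simp only [List.mem_map] at hy
  obtain ⟨g, hg, rfl⟩ := hy
  exact ⟨g, hu g hg, rfl⟩

theorem diag_of_mem_Estar_aux {α : Type*} {Sig : Set α} :
    ∀ (Ls : List (List (α × α))), (∀ y ∈ Ls, ∃ e ∈ Sig, y = [(e, e)]) →
      ∃ u : List α, (∀ g ∈ u, g ∈ Sig) ∧ Ls.flatten = List.zipWith Prod.mk u u
  | [], _ => ⟨[], by simp, rfl⟩
  | y :: Ls, h => by
      obtain ⟨e, he, rfl⟩ := h y (by simp)
      obtain ⟨u, hu, hflat⟩ := diag_of_mem_Estar_aux Ls (fun z hz => h z (by simp [hz]))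
      refine ⟨e :: u, ?_, by simp [hflat]⟩
      intro g hg
      rcases List.mem_cons.mp hg with rfl | hg
      · exact he
      · exact hu g hg

theorem diag_of_mem_Estar {α : Type*} {Sig : Set α} {w : List (α × α)}
    (E' : Language (α × α)) (hE' : E' = {w | ∃ e ∈ Sig, w = [(e, e)]})
    (h : w ∈ E'∗) :
    ∃ u : List α, (∀ g ∈ u, g ∈ Sig) ∧ w = List.zipWith Prod.mk u u := by
  subst hE'
  obtain ⟨Ls, rfl, hLs⟩ := Language.mem_kstar.mp h
  exact diag_of_mem_Estar_aux Ls hLs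

end RewriteAux

/-- One rewriting step of the rewriting system `S`: `u ⟹_S v` iff some rule `(ℓ, r) ∈ S`
applies, i.e. `u = α ++ ℓ ++ β` and `v = α ++ r ++ β`. -/
def RewriteStep {α : Type*} (S : List (List α × List α)) (u v : List α) : Prop :=
  ∃ p ∈ S, ∃ x y : List α, u = x ++ p.1 ++ y ∧ v = x ++ p.2 ++ y

/-- Let `S` be a length-preserving rewriting system over a finite alphabet `Σ ∋ a, b`,
let `d ∉ Σ` and `c ∉ Σ ∪ {d}` be new letters, and let `Γ = Σ ∪ {d}`.  With
`E = { [e,e] : e ∈ Σ }`, `R = { r × ℓ : (ℓ → r) ∈ S }` and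
`L = [d,c] ([a,c])⁺ [d,d] (E* R E* [d,d])* ([c,b])⁺ [c,d]` (products of words being
pointwise zips), we have, for every `n ≥ 2`:  `a^{n-1} ⟹*_S b^{n-1}` iff `L` contains a
word of the form `(x c^n) × (c^n x)` for some `x ∈ Γ*`. -/
theorem rewrite_power_iff_accepts_shift {Ω : Type*} [Fintype Ω]
    (Sig : Set Ω) (a b d c : Ω)
    (ha : a ∈ Sig) (hb : b ∈ Sig) (hd : d ∉ Sig) (hc : c ∉ Sig) (hcd : c ≠ d)
    (S : List (List Ω × List Ω))
    (hSalph : ∀ p ∈ S, (∀ g ∈ p.1, g ∈ Sig) ∧ (∀ g ∈ p.2, g ∈ Sig))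
    (hSlen : ∀ p ∈ S, p.1.length = p.2.length)
    (E R L : Language (Ω × Ω))
    (hE : E = {w | ∃ e ∈ Sig, w = [(e, e)]})
    (hR : R = {w | ∃ p ∈ S, w = List.zipWith Prod.mk p.2 p.1})
    (hL : L = ({[(d, c)]} : Language (Ω × Ω)) *
        (({[(a, c)]} : Language (Ω × Ω)) * ({[(a, c)]} : Language (Ω × Ω))∗) *
        ({[(d, d)]} : Language (Ω × Ω)) *
        ((E∗ * R * E∗) * ({[(d, d)]} : Language (Ω × Ω)))∗ *
        (({[(c, b)]} : Language (Ω × Ω)) * ({[(c, b)]} : Language (Ω × Ω))∗) *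
        ({[(c, d)]} : Language (Ω × Ω))) :
    ∀ n : ℕ, 2 ≤ n →
      (Relation.ReflTransGen (RewriteStep S)
          (List.replicate (n - 1) a) (List.replicate (n - 1) b) ↔
        ∃ x : List Ω, (∀ g ∈ x, g ∈ Sig ∨ g = d) ∧
          List.zipWith Prod.mk (x ++ List.replicate n c) (List.replicate n c ++ x) ∈ L) := by
  intro n hn
  obtain ⟨m, rfl⟩ : ∃ m, n = m + 2 := ⟨n - 2, by omega⟩
  have hnorm : m + 2 - 1 = m + 1 := rfl
  rw [hnorm]
  -- the "P" part of the language
  have Pstep : ∀ (W k : List (Ω × Ω)),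
      W ∈ (({[(d, c)]} : Language (Ω × Ω)) *
        (({[(a, c)]} : Language (Ω × Ω)) * ({[(a, c)]} : Language (Ω × Ω))∗) *
        ({[(d, d)]} : Language (Ω × Ω)) *
        ((E∗ * R * E∗) * ({[(d, d)]} : Language (Ω × Ω)))∗) →
      k ∈ ((E∗ * R * E∗) * ({[(d, d)]} : Language (Ω × Ω))) →
      W ++ k ∈ (({[(d, c)]} : Language (Ω × Ω)) *
        (({[(a, c)]} : Language (Ω × Ω)) * ({[(a, c)]} : Language (Ω × Ω))∗) *
        ({[(d, d)]} : Language (Ω × Ω)) *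
        ((E∗ * R * E∗) * ({[(d, d)]} : Language (Ω × Ω)))∗) := by
    intro W k hW hk
    obtain ⟨q, hq, mw, hm, rfl⟩ := Language.mem_mul.mp hW
    obtain ⟨Ls, rfl, hLs⟩ := Language.mem_kstar.mp hm
    refine Language.mem_mul.mpr ⟨q, hq, Ls.flatten ++ k, ?_, by simp⟩
    refine Language.mem_kstar.mpr ⟨Ls ++ [k], by simp, ?_⟩
    intro y hy
    rcases List.mem_append.mp hy with h | h
    · exact hLs y h
    · rw [List.mem_singleton.mp h]; exact hk
  constructor
  · intro hder
    have main : ∀ w, Relation.ReflTransGen (RewriteStep S) (List.replicate (m + 1) a) w →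
        (∀ g ∈ w, g ∈ Sig) ∧ w.length = m + 1 ∧
        ∃ y : List Ω, (∀ g ∈ y, g ∈ Sig ∨ g = d) ∧
          List.zipWith Prod.mk (y ++ w ++ [d]) (List.replicate (m + 2) c ++ y) ∈
            (({[(d, c)]} : Language (Ω × Ω)) *
              (({[(a, c)]} : Language (Ω × Ω)) * ({[(a, c)]} : Language (Ω × Ω))∗) *
              ({[(d, d)]} : Language (Ω × Ω)) *
              ((E∗ * R * E∗) * ({[(d, d)]} : Language (Ω × Ω)))∗) := by
      intro w hw
      induction hw with
      | refl =>
        refine ⟨fun g hg => (List.eq_of_mem_replicate hg) ▸ ha, by simp, [d], by simp, ?_⟩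
        have hzip : List.zipWith Prod.mk ([d] ++ List.replicate (m + 1) a ++ [d])
            (List.replicate (m + 2) c ++ [d])
            = [(d, c)] ++ List.replicate (m + 1) (a, c) ++ [(d, d)] := by
          have e1 : List.replicate (m + 2) c ++ [d]
              = [c] ++ (List.replicate (m + 1) c ++ [d]) := by
            simp [List.replicate_succ]
          rw [e1, List.append_assoc]
          rw [List.zipWith_append (f := Prod.mk) (l₁ := [d]) (l₁' := (List.replicate (m + 1) a ++ [d])) (l₂ := [c]) (l₂' := (List.replicate (m + 1) c ++ [d])) (by simp)]
          rw [List.zipWith_append (f := Prod.mk) (l₁ := (List.replicate (m + 1) a)) (l₁' := [d]) (l₂ := (List.replicate (m + 1) c)) (l₂' := [d]) (by simp)]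
          rw [RewriteAux.zip_replicate]
          simp
        rw [hzip]
        refine Language.mem_mul.mpr ⟨[(d, c)] ++ List.replicate (m + 1) (a, c) ++ [(d, d)],
          ?_, [], Language.nil_mem_kstar _, by simp⟩
        refine Language.mem_mul.mpr ⟨[(d, c)] ++ List.replicate (m + 1) (a, c),
          Language.mem_mul.mpr ⟨[(d, c)], rfl, List.replicate (m + 1) (a, c), ?_, rfl⟩,
          [(d, d)], rfl, rfl⟩
        exact Language.mem_mul.mpr ⟨[(a, c)], rfl, List.replicate m (a, c),
          RewriteAux.rep_mem_singleton_star _ m, by simp [List.replicate_succ]⟩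
      | @tail w w' hrest hstep ih =>
        obtain ⟨hwS, hwlen, y, hy, hmem⟩ := ih
        obtain ⟨p, hpS, α, β, hw1, hw2⟩ := hstep
        have hαS : ∀ g ∈ α, g ∈ Sig := fun g hg => hwS g (by rw [hw1]; simp [hg])
        have hβS : ∀ g ∈ β, g ∈ Sig := fun g hg => hwS g (by rw [hw1]; simp [hg])
        have hplen := hSlen p hpS
        have hw'S : ∀ g ∈ w', g ∈ Sig := by
          intro g hg
          rw [hw2] at hg
          simp only [List.mem_append] at hg
          rcases hg with (hg | hg) | hg
          · exact hαS g hg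
          · exact (hSalph p hpS).2 g hg
          · exact hβS g hg
        have hw'len : w'.length = m + 1 := by
          rw [hw1] at hwlen; rw [hw2]
          simp only [List.length_append] at hwlen ⊢
          omega
        refine ⟨hw'S, hw'len, y ++ w ++ [d], ?_, ?_⟩
        · intro g hg
          simp only [List.append_assoc, List.mem_append, List.mem_singleton] at hg
          rcases hg with hg | hg | hg
          · exact hy g hg
          · exact Or.inl (hwS g hg)
          · exact Or.inr hg
        · have hkmem : List.zipWith Prod.mk w' w ++ [(d, d)]
              ∈ ((E∗ * R * E∗) * ({[(d, d)]} : Language (Ω × Ω))) := by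
            refine Language.mem_mul.mpr ⟨List.zipWith Prod.mk w' w, ?_, [(d, d)], rfl, rfl⟩
            have hzipw : List.zipWith Prod.mk w' w
                = (List.zipWith Prod.mk α α ++ List.zipWith Prod.mk p.2 p.1)
                  ++ List.zipWith Prod.mk β β := by
              rw [hw1, hw2]
              rw [List.zipWith_append (f := Prod.mk) (l₁ := (α ++ p.2)) (l₁' := β) (l₂ := (α ++ p.1)) (l₂' := β)
                (by simp [hplen])]
              rw [List.zipWith_append (f := Prod.mk) (l₁ := α) (l₁' := p.2) (l₂ := α) (l₂' := p.1) rfl]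
            rw [hzipw]
            refine Language.mem_mul.mpr ⟨_, Language.mem_mul.mpr
              ⟨_, RewriteAux.diag_mem_Estar E hE α hαS, _, ?_, rfl⟩,
              _, RewriteAux.diag_mem_Estar E hE β hβS, rfl⟩
            rw [hR]; exact ⟨p, hpS, rfl⟩
          have hzipfull : List.zipWith Prod.mk ((y ++ w ++ [d]) ++ w' ++ [d])
              (List.replicate (m + 2) c ++ (y ++ w ++ [d]))
              = List.zipWith Prod.mk (y ++ w ++ [d]) (List.replicate (m + 2) c ++ y)
                ++ (List.zipWith Prod.mk w' w ++ [(d, d)]) := by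
            have e1 : (y ++ w ++ [d]) ++ w' ++ [d] = (y ++ w ++ [d]) ++ (w' ++ [d]) := by
              simp
            have e2 : List.replicate (m + 2) c ++ (y ++ w ++ [d])
                = (List.replicate (m + 2) c ++ y) ++ (w ++ [d]) := by simp
            rw [e1, e2]
            rw [List.zipWith_append (f := Prod.mk) (l₁ := (y ++ w ++ [d])) (l₁' := (w' ++ [d])) (l₂ := (List.replicate (m + 2) c ++ y)) (l₂' := (w ++ [d]))
              (by simp only [List.length_append, List.length_replicate,
                List.length_cons, List.length_nil, hwlen]; omega)]
            rw [List.zipWith_append (f := Prod.mk) (l₁ := w') (l₁' := [d]) (l₂ := w) (l₂' := [d]) (by rw [hw'len, hwlen])]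
            rfl
          rw [hzipfull]
          exact Pstep _ _ hmem hkmem
    obtain ⟨-, -, y, hy, hmem⟩ := main _ hder
    refine ⟨y ++ List.replicate (m + 1) b ++ [d], ?_, ?_⟩
    · intro g hg
      simp only [List.append_assoc, List.mem_append, List.mem_singleton] at hg
      rcases hg with hg | hg | hg
      · exact hy g hg
      · exact Or.inl ((List.eq_of_mem_replicate hg) ▸ hb)
      · exact Or.inr hg
    · rw [hL]
      have hzip : List.zipWith Prod.mk
          ((y ++ List.replicate (m + 1) b ++ [d]) ++ List.replicate (m + 2) c)
          (List.replicate (m + 2) c ++ (y ++ List.replicate (m + 1) b ++ [d]))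
          = List.zipWith Prod.mk (y ++ List.replicate (m + 1) b ++ [d])
              (List.replicate (m + 2) c ++ y)
            ++ (List.replicate (m + 1) (c, b) ++ [(c, d)]) := by
        have e2 : List.replicate (m + 2) c ++ (y ++ List.replicate (m + 1) b ++ [d])
            = (List.replicate (m + 2) c ++ y) ++ (List.replicate (m + 1) b ++ [d]) := by
          simp
        rw [e2]
        rw [List.zipWith_append (f := Prod.mk) (l₁ := (y ++ List.replicate (m + 1) b ++ [d])) (l₁' := (List.replicate (m + 2) c)) (l₂ := (List.replicate (m + 2) c ++ y)) (l₂' := (List.replicate (m + 1) b ++ [d]))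
          (by simp only [List.length_append, List.length_replicate,
            List.length_cons, List.length_nil]; omega)]
        congr 1
        rw [List.replicate_succ' (n := m + 1) (a := c)]
        rw [List.zipWith_append (f := Prod.mk) (l₁ := (List.replicate (m + 1) c)) (l₁' := [c]) (l₂ := (List.replicate (m + 1) b)) (l₂' := [d]) (by simp)]
        rw [RewriteAux.zip_replicate]
        rfl
      rw [hzip]
      refine Language.mem_mul.mpr ⟨_ ++ List.replicate (m + 1) (c, b),
        Language.mem_mul.mpr ⟨_, hmem, List.replicate (m + 1) (c, b), ?_, rfl⟩,
        [(c, d)], rfl, by simp⟩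
      exact Language.mem_mul.mpr ⟨[(c, b)], rfl, List.replicate m (c, b),
        RewriteAux.rep_mem_singleton_star _ m, by simp [List.replicate_succ]⟩
  · rintro ⟨x, hx, hmem⟩
    have hxc : ∀ g ∈ x, g ≠ c := by
      intro g hg he
      rcases hx g hg with h | h
      · exact hc (he ▸ h)
      · exact hcd (he ▸ h)
    -- the key induction for parsing the middle part
    have key : ∀ (Ms : List (List (Ω × Ω))), ∀ (j : ℕ),
        (∀ u ∈ Ms, u ∈ ((E∗ * R * E∗) * ({[(d, d)]} : Language (Ω × Ω)))) →
        ∀ (w s : List Ω), (∀ g ∈ w, g ∈ Sig) → w.length = m + 1 → (∀ g ∈ s, g ≠ c) →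
        List.zipWith Prod.mk (s ++ List.replicate (m + 2) c) (w ++ [d] ++ s)
          = Ms.flatten ++ (List.replicate (j + 1) (c, b) ++ [(c, d)]) →
        Relation.ReflTransGen (RewriteStep S) w (List.replicate (m + 1) b) := by
      intro Ms
      induction Ms with
      | nil =>
        intro j _ w s hw hwlen hs heq
        simp only [List.flatten_nil, List.nil_append] at heq
        have hlen2 : (s ++ List.replicate (m + 2) c).length = (w ++ [d] ++ s).length := by
          simp only [List.length_append, List.length_replicate, List.length_cons,
            List.length_nil, hwlen]
          omega
        have hfst := congrArg (List.map Prod.fst) heq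
        rw [RewriteAux.map_fst_zipWith _ _ hlen2] at hfst
        simp only [List.map_append, List.map_replicate, List.map_cons, List.map_nil] at hfst
        have hs0 : s = [] := by
          cases s with
          | nil => rfl
          | cons g s' =>
            exfalso
            refine hs g (by simp) ?_
            have hgmem : g ∈ List.replicate (j + 1) (c, b).1 ++ [(c, d).1] := by
              rw [← hfst]; simp
            rcases List.mem_append.mp hgmem with h | h
            · exact List.eq_of_mem_replicate h
            · simpa using h
        subst hs0
        have hsnd := congrArg (List.map Prod.snd) heq
        rw [RewriteAux.map_snd_zipWith _ _ hlen2] at hsnd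
        simp only [List.map_append, List.map_replicate, List.map_cons, List.map_nil,
          List.append_nil] at hsnd
        have hw' : w = List.replicate (j + 1) (c, b).2 :=
          (List.append_inj' hsnd (by simp)).1
        have hj : j + 1 = m + 1 := by
          rw [hw'] at hwlen; simpa using hwlen
        rw [hw']
        rw [show List.replicate (j + 1) (c, b).2 = List.replicate (m + 1) b by rw [hj]]
      | cons M₁ Ms ih =>
        intro j hMs w s hw hwlen hs heq
        have hM₁ := hMs M₁ (by simp)
        obtain ⟨u, hu, ddl, hddl, hM₁eq⟩ := Language.mem_mul.mp hM₁
        change _ = _ at hddl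
        subst hddl
        obtain ⟨u12, h12, e2w, he2, rfl⟩ := Language.mem_mul.mp hu
        obtain ⟨e1w, he1, ρ, hρ, rfl⟩ := Language.mem_mul.mp h12
        obtain ⟨α, hα, rfl⟩ := RewriteAux.diag_of_mem_Estar E hE he1
        obtain ⟨β, hβ, rfl⟩ := RewriteAux.diag_of_mem_Estar E hE he2
        rw [hR] at hρ
        obtain ⟨p, hpS, rfl⟩ := hρ
        have hplen := hSlen p hpS
        have hp1S := (hSalph p hpS).1
        have hp2S := (hSalph p hpS).2
        -- snd coordinates
        have hlen2 : (s ++ List.replicate (m + 2) c).length = (w ++ [d] ++ s).length := by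
          simp only [List.length_append, List.length_replicate, List.length_cons,
            List.length_nil, hwlen]
          omega
        have hsnd2 : w ++ d :: s = (α ++ p.1 ++ β) ++ d ::
            ((Ms.flatten ++ (List.replicate (j + 1) (c, b) ++ [(c, d)])).map Prod.snd) := by
          have h := congrArg (List.map Prod.snd) heq
          rw [RewriteAux.map_snd_zipWith _ _ hlen2, ← hM₁eq] at h
          simpa [RewriteAux.map_snd_zipWith α α rfl,
            RewriteAux.map_snd_zipWith p.2 p.1 hplen.symm,
            RewriteAux.map_snd_zipWith β β rfl, Function.comp_def] using h
        have hdw : ∀ g ∈ w, g ≠ d := fun g hg he => hd (he ▸ hw g hg)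
        have hdv : ∀ g ∈ α ++ p.1 ++ β, g ≠ d := by
          intro g hg he
          apply hd
          rw [← he]
          simp only [List.mem_append] at hg
          rcases hg with (hg | hg) | hg
          · exact hα g hg
          · exact hp1S g hg
          · exact hβ g hg
        obtain ⟨hwv, -⟩ := RewriteAux.dsplit w s (α ++ p.1 ++ β) _ hsnd2 hdw hdv
        -- fst coordinates
        have hfst2 : s ++ List.replicate (m + 2) c = (α ++ p.2 ++ β ++ [d]) ++
            ((Ms.flatten ++ (List.replicate (j + 1) (c, b) ++ [(c, d)])).map Prod.fst) := by
          have h := congrArg (List.map Prod.fst) heq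
          rw [RewriteAux.map_fst_zipWith _ _ hlen2, ← hM₁eq] at h
          simpa [RewriteAux.map_fst_zipWith α α rfl,
            RewriteAux.map_fst_zipWith p.2 p.1 hplen.symm,
            RewriteAux.map_fst_zipWith β β rfl, Function.comp_def] using h
        have hvnc : ∀ g ∈ α ++ p.2 ++ β ++ [d], g ≠ c := by
          intro g hg he
          simp only [List.mem_append, List.mem_singleton] at hg
          rcases hg with ((hg | hg) | hg) | hg
          · exact hc (he ▸ hα g hg)
          · exact hc (he ▸ hp2S g hg)
          · exact hc (he ▸ hβ g hg)
          · exact hcd (he ▸ hg)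
        obtain ⟨s', hss', -⟩ := RewriteAux.split_no_c s (α ++ p.2 ++ β ++ [d]) _ (m + 2)
          hfst2 hvnc
        -- lengths
        have hw'len : (α ++ p.2 ++ β).length = m + 1 := by
          rw [hwv] at hwlen
          simp only [List.length_append] at hwlen ⊢
          omega
        -- the zip equation for the recursive call
        have hzipsplit : List.zipWith Prod.mk (s ++ List.replicate (m + 2) c) (w ++ [d] ++ s)
            = (((List.zipWith Prod.mk α α ++ List.zipWith Prod.mk p.2 p.1)
                ++ List.zipWith Prod.mk β β) ++ [(d, d)])
              ++ List.zipWith Prod.mk (s' ++ List.replicate (m + 2) c)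
                  ((α ++ p.2 ++ β) ++ [d] ++ s') := by
          have e1 : s ++ List.replicate (m + 2) c
              = ((α ++ p.2 ++ β) ++ [d]) ++ (s' ++ List.replicate (m + 2) c) := by
            rw [hss']; simp
          have e2 : w ++ [d] ++ s
              = ((α ++ p.1 ++ β) ++ [d]) ++ ((α ++ p.2 ++ β) ++ [d] ++ s') := by
            rw [hwv, hss']
          rw [e1, e2]
          rw [List.zipWith_append (f := Prod.mk) (l₁ := ((α ++ p.2 ++ β) ++ [d])) (l₁' := (s' ++ List.replicate (m + 2) c)) (l₂ := ((α ++ p.1 ++ β) ++ [d])) (l₂' := ((α ++ p.2 ++ β) ++ [d] ++ s'))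
            (by simp only [List.length_append, List.length_cons, List.length_nil, hplen])]
          congr 1
          rw [List.zipWith_append (f := Prod.mk) (l₁ := (α ++ p.2 ++ β)) (l₁' := [d]) (l₂ := (α ++ p.1 ++ β)) (l₂' := [d])
            (by simp only [List.length_append, hplen])]
          rw [List.zipWith_append (f := Prod.mk) (l₁ := (α ++ p.2)) (l₁' := β) (l₂ := (α ++ p.1)) (l₂' := β)
            (by simp only [List.length_append, hplen])]
          rw [List.zipWith_append (f := Prod.mk) (l₁ := α) (l₁' := p.2) (l₂ := α) (l₂' := p.1) rfl]
          rfl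
        have heq' : List.zipWith Prod.mk (s' ++ List.replicate (m + 2) c)
            ((α ++ p.2 ++ β) ++ [d] ++ s')
            = Ms.flatten ++ (List.replicate (j + 1) (c, b) ++ [(c, d)]) := by
          have h2 : (((List.zipWith Prod.mk α α ++ List.zipWith Prod.mk p.2 p.1)
                ++ List.zipWith Prod.mk β β) ++ [(d, d)])
              ++ List.zipWith Prod.mk (s' ++ List.replicate (m + 2) c)
                  ((α ++ p.2 ++ β) ++ [d] ++ s')
              = (((List.zipWith Prod.mk α α ++ List.zipWith Prod.mk p.2 p.1)
                ++ List.zipWith Prod.mk β β) ++ [(d, d)])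
              ++ (Ms.flatten ++ (List.replicate (j + 1) (c, b) ++ [(c, d)])) := by
            rw [← hzipsplit, heq, ← hM₁eq]
            simp
          exact List.append_cancel_left h2
        have hw'S : ∀ g ∈ α ++ p.2 ++ β, g ∈ Sig := by
          intro g hg
          simp only [List.mem_append] at hg
          rcases hg with (hg | hg) | hg
          · exact hα g hg
          · exact hp2S g hg
          · exact hβ g hg
        have hs'c : ∀ g ∈ s', g ≠ c := by
          intro g hg
          exact hs g (by rw [hss']; simp [hg])
        have hder' := ih j (fun u hu => hMs u (by simp [hu])) (α ++ p.2 ++ β) s'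
          hw'S hw'len hs'c heq'
        refine Relation.ReflTransGen.head ⟨p, hpS, α, β, hwv, rfl⟩ hder'
    -- now parse the outer structure of the word
    rw [hL] at hmem
    obtain ⟨u5, h5, f, hf, hW5⟩ := Language.mem_mul.mp hmem
    obtain ⟨u4, h4, ebb, hebb, hW4⟩ := Language.mem_mul.mp h5
    obtain ⟨u3, h3, mw, hmw, hW3⟩ := Language.mem_mul.mp h4
    obtain ⟨u2, h2, ddw, hddw, hW2⟩ := Language.mem_mul.mp h3
    obtain ⟨a1, ha1, arep, harep, hW1⟩ := Language.mem_mul.mp h2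
    change _ = _ at hf hddw ha1
    subst hf hddw ha1 hW1 hW2 hW3 hW4
    obtain ⟨q1, hq1, qr1, hqr1, hcat1⟩ := Language.mem_mul.mp harep
    change _ = _ at hq1
    obtain ⟨k, rfl⟩ := RewriteAux.mem_singleton_star hqr1
    subst hq1 hcat1
    obtain ⟨q2, hq2, qr2, hqr2, hcat2⟩ := Language.mem_mul.mp hebb
    change _ = _ at hq2
    obtain ⟨j, rfl⟩ := RewriteAux.mem_singleton_star hqr2
    subst hq2 hcat2
    obtain ⟨Ms, rfl, hMs⟩ := Language.mem_kstar.mp hmw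
    -- hW5 : big concatenation = zip word
    have hzlen : (x ++ List.replicate (m + 2) c).length
        = (List.replicate (m + 2) c ++ x).length := by simp; omega
    -- snd coordinates: find the first d in x
    have hsnd2 : List.replicate (m + 2) c ++ x = List.replicate (k + 2) c ++
        (d :: ((Ms.flatten ++ (([(c, b)] ++ List.replicate j (c, b)) ++ [(c, d)])).map
          Prod.snd)) := by
      have h := congrArg (List.map Prod.snd) hW5
      rw [RewriteAux.map_snd_zipWith _ _ hzlen] at h
      rw [← h]
      simp [List.replicate_succ]
    obtain ⟨hk2, hxd⟩ := RewriteAux.cblock x _ (m + 2) (k + 2) hsnd2 hxc hcd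
    have hk : m = k := by omega
    subst hk
    -- fst coordinates: split off the prefix of x
    have hfst2 : x ++ List.replicate (m + 2) c = ([d] ++ (List.replicate (m + 1) a ++ [d])) ++
        ((Ms.flatten ++ (([(c, b)] ++ List.replicate j (c, b)) ++ [(c, d)])).map Prod.fst) := by
      have h := congrArg (List.map Prod.fst) hW5
      rw [RewriteAux.map_fst_zipWith _ _ hzlen] at h
      rw [← h]
      simp [List.replicate_succ]
    have hvnc : ∀ g ∈ [d] ++ (List.replicate (m + 1) a ++ [d]), g ≠ c := by
      intro g hg he
      simp only [List.mem_append, List.mem_singleton, List.mem_replicate] at hg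
      rcases hg with hg | hg | hg
      · exact hcd (he ▸ hg)
      · exact hc (he ▸ (hg.2 ▸ ha))
      · exact hcd (he ▸ hg)
    obtain ⟨s, hxs, -⟩ := RewriteAux.split_no_c x ([d] ++ (List.replicate (m + 1) a ++ [d]))
      _ (m + 2) hfst2 hvnc
    have hsC : ∀ g ∈ s, g ≠ c := fun g hg => hxc g (by rw [hxs]; simp [hg])
    have hzipsplit : List.zipWith Prod.mk (x ++ List.replicate (m + 2) c)
        (List.replicate (m + 2) c ++ x)
        = ([(d, c)] ++ (List.replicate (m + 1) (a, c) ++ [(d, d)]))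
          ++ List.zipWith Prod.mk (s ++ List.replicate (m + 2) c)
              (List.replicate (m + 1) a ++ [d] ++ s) := by
      have e1 : x ++ List.replicate (m + 2) c
          = ([d] ++ (List.replicate (m + 1) a ++ [d])) ++ (s ++ List.replicate (m + 2) c) := by
        rw [hxs]; simp
      have e2 : List.replicate (m + 2) c ++ x
          = ([c] ++ (List.replicate (m + 1) c ++ [d]))
            ++ (List.replicate (m + 1) a ++ [d] ++ s) := by
        rw [hxs]; simp [List.replicate_succ]
      rw [e1, e2]
      rw [List.zipWith_append (f := Prod.mk) (l₁ := ([d] ++ (List.replicate (m + 1) a ++ [d]))) (l₁' := (s ++ List.replicate (m + 2) c)) (l₂ := ([c] ++ (List.replicate (m + 1) c ++ [d]))) (l₂' := (List.replicate (m + 1) a ++ [d] ++ s)) (by simp)]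
      congr 1
      rw [List.zipWith_append (f := Prod.mk) (l₁ := [d]) (l₁' := (List.replicate (m + 1) a ++ [d])) (l₂ := [c]) (l₂' := (List.replicate (m + 1) c ++ [d])) (by simp)]
      rw [List.zipWith_append (f := Prod.mk) (l₁ := (List.replicate (m + 1) a)) (l₁' := [d]) (l₂ := (List.replicate (m + 1) c)) (l₂' := [d]) (by simp)]
      rw [RewriteAux.zip_replicate]
      rfl
    have heq' : List.zipWith Prod.mk (s ++ List.replicate (m + 2) c)
        (List.replicate (m + 1) a ++ [d] ++ s)
        = Ms.flatten ++ (List.replicate (j + 1) (c, b) ++ [(c, d)]) := by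
      have h2 : ([(d, c)] ++ (List.replicate (m + 1) (a, c) ++ [(d, d)]))
          ++ List.zipWith Prod.mk (s ++ List.replicate (m + 2) c)
              (List.replicate (m + 1) a ++ [d] ++ s)
          = ([(d, c)] ++ (List.replicate (m + 1) (a, c) ++ [(d, d)]))
            ++ (Ms.flatten ++ (List.replicate (j + 1) (c, b) ++ [(c, d)])) := by
        rw [← hzipsplit, ← hW5]
        simp [List.replicate_succ]
      exact List.append_cancel_left h2
    exact key Ms j hMs (List.replicate (m + 1) a) s
      (fun g hg => (List.eq_of_mem_replicate hg) ▸ ha) (by simp) hsC heq'
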